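/- For every r ≥ 0, the map Ψ_r is a bijection from the set D_n of Dyck words of semilength n to itself, for every n ≥ 0. -/
import Mathlib


attribute [local instance] Classical.propDecidable

namespace DyckBij

/-- A word over `Bool` (`true` = up-step `u`, `false` = down-step `d`) is a Dyck word:
equally many `u`'s and `d`'s, and every prefix has at least as many `u`'s as `d`'s. -/
def IsDyck (w : List Bool) : Prop :=
  w.count false = w.count true ∧
    ∀ p : List Bool, p <+: w → p.count false ≤ p.count true

/-- `Matched w i j`: the `u` at (0-indexed) position `i` of `w` is matched (as in matched
parentheses) with the `d` at position `j`, i.e. `w = A u B d C` with `B` a Dyck word,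
`|A| = i` and `j = i + |B| + 1`. -/
def Matched (w : List Bool) (i j : ℕ) : Prop :=
  ∃ A B C : List Bool, IsDyck B ∧ w = A ++ true :: (B ++ false :: C) ∧
    A.length = i ∧ j = i + B.length + 1

/-- Positions `i` and `j` form a matched pair of steps of `w`. -/
def MatchPair (w : List Bool) (i j : ℕ) : Prop :=
  Matched w i j ∨ Matched w j i

/-- The 0-indexed reading order `σ^{(r)}` on a word of length `L`: the first `2r` positions
are read in order, and the remaining positions are read in zigzag
`2r, L-1, 2r+1, L-2, …` (0-indexed). For `r = 0` this is the zigzag order `σ`. -/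
def zigR (r L p : ℕ) : ℕ :=
  if p < 2 * r then p
  else if p % 2 = 0 then p / 2 + r
  else L + r - (p + 1) / 2

/-- The bijection `Ψ_r`: the `p`-th letter of `Ψ_r(w)` is `u` iff the match of the
`σ^{(r)}_p`-th step of `w` does not occur among the previously read steps
`σ^{(r)}_0, …, σ^{(r)}_{p-1}`. -/
noncomputable def psiR (r : ℕ) (w : List Bool) : List Bool :=
  List.ofFn fun p : Fin w.length =>
    if ∃ p' : ℕ, p' < (p : ℕ) ∧
        MatchPair w (zigR r w.length p') (zigR r w.length (p : ℕ))
    then false else true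

/-- The bijection `Ψ = Ψ_0`. -/
noncomputable def psi : List Bool → List Bool := psiR 0

/-- Number of tunnels of `w` with `|A| = |C| + 2r` (midpoint at `x = n + r`),
i.e. decompositions `w = A u B d C` with `B` a Dyck word; tunnels are indexed by `|A|`. -/
noncomputable def tunEq (r : ℕ) (w : List Bool) : ℕ :=
  {i : ℕ | ∃ A B C : List Bool, IsDyck B ∧ w = A ++ true :: (B ++ false :: C) ∧
    A.length = i ∧ A.length = C.length + 2 * r}.ncard

/-- Number of tunnels of `w` with `|A| > |C| + 2r` (midpoint in `x > n + r`). -/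
noncomputable def tunGt (r : ℕ) (w : List Bool) : ℕ :=
  {i : ℕ | ∃ A B C : List Bool, IsDyck B ∧ w = A ++ true :: (B ++ false :: C) ∧
    A.length = i ∧ C.length + 2 * r < A.length}.ncard

/-- Number of tunnels of `w` with `|A| ≤ |C| + 2r` (midpoint in `x ≤ n + r`). -/
noncomputable def tunLe (r : ℕ) (w : List Bool) : ℕ :=
  {i : ℕ | ∃ A B C : List Bool, IsDyck B ∧ w = A ++ true :: (B ++ false :: C) ∧
    A.length = i ∧ A.length ≤ C.length + 2 * r}.ncard

/-- Number of centered tunnels `ct(w)`. -/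
noncomputable def ctun (w : List Bool) : ℕ := tunEq 0 w

/-- Number of right tunnels `rt(w)`. -/
noncomputable def rtun (w : List Bool) : ℕ := tunGt 0 w

/-- Number of left tunnels `lt(w)`: tunnels with `|A| < |C|`. -/
noncomputable def ltun (w : List Bool) : ℕ :=
  {i : ℕ | ∃ A B C : List Bool, IsDyck B ∧ w = A ++ true :: (B ++ false :: C) ∧
    A.length = i ∧ A.length < C.length}.ncard

/-- Number of multitunnels of `w` with `|A| = |C| + 2r` (midpoint at `x = n + r`):
decompositions `w = A B C` with `B` a nonempty Dyck word, indexed by `(|A|, |B|)`. -/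
noncomputable def mtunEq (r : ℕ) (w : List Bool) : ℕ :=
  {q : ℕ × ℕ | ∃ A B C : List Bool, IsDyck B ∧ B ≠ [] ∧ w = A ++ B ++ C ∧
    A.length = q.1 ∧ B.length = q.2 ∧ A.length = C.length + 2 * r}.ncard

/-- Number of centered multitunnels `cmt(w)`. -/
noncomputable def cmtun (w : List Bool) : ℕ := mtunEq 0 w

/-- Number of hills `h(w)`: decompositions `w = X u d Y` with `X, Y` Dyck words. -/
noncomputable def numHills (w : List Bool) : ℕ :=
  {i : ℕ | ∃ X Y : List Bool, IsDyck X ∧ IsDyck Y ∧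
    w = X ++ true :: false :: Y ∧ X.length = i}.ncard

/-- Number of hills of `w` lying in `x > 2r`, i.e. with `|X| ≥ 2r`. -/
noncomputable def numHillsAfter (r : ℕ) (w : List Bool) : ℕ :=
  {i : ℕ | ∃ X Y : List Bool, IsDyck X ∧ IsDyck Y ∧
    w = X ++ true :: false :: Y ∧ X.length = i ∧ 2 * r ≤ X.length}.ncard

/-- Number of arches (equivalently, returns) `ret(w)`: decompositions
`w = X (u B d) Y` with `X, B, Y` Dyck words. -/
noncomputable def numArches (w : List Bool) : ℕ :=
  {i : ℕ | ∃ X B Y : List Bool, IsDyck X ∧ IsDyck B ∧ IsDyck Y ∧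
    w = X ++ true :: (B ++ false :: Y) ∧ X.length = i}.ncard

/-- Number of arches of `w` lying in `x ≥ 2r`, i.e. with `|X| ≥ 2r`. -/
noncomputable def numArchesAfter (r : ℕ) (w : List Bool) : ℕ :=
  {i : ℕ | ∃ X B Y : List Bool, IsDyck X ∧ IsDyck B ∧ IsDyck Y ∧
    w = X ++ true :: (B ++ false :: Y) ∧ X.length = i ∧ 2 * r ≤ X.length}.ncard

/-- Number of odd rises `odr(w)`: `u`-steps at odd 1-indexed positions
(even 0-indexed positions). -/
noncomputable def oddRises (w : List Bool) : ℕ :=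
  {p : ℕ | p < w.length ∧ p % 2 = 0 ∧ w.getD p false = true}.ncard

/-- Number of even rises `er(w)`: `u`-steps at even 1-indexed positions
(odd 0-indexed positions). -/
noncomputable def evenRises (w : List Bool) : ℕ :=
  {p : ℕ | p < w.length ∧ p % 2 = 1 ∧ w.getD p false = true}.ncard

/-- Number of odd rises of `w` at 1-indexed positions `> 2r`. -/
noncomputable def oddRisesAfter (r : ℕ) (w : List Bool) : ℕ :=
  {p : ℕ | p < w.length ∧ p % 2 = 0 ∧ 2 * r ≤ p ∧ w.getD p false = true}.ncard

/-- Number of even rises of `w` at 1-indexed positions `> 2r`. -/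
noncomputable def evenRisesAfter (r : ℕ) (w : List Bool) : ℕ :=
  {p : ℕ | p < w.length ∧ p % 2 = 1 ∧ 2 * r ≤ p ∧ w.getD p false = true}.ncard

/-- Number of `u`-steps of `w` at 1-indexed positions `≤ 2r`. -/
noncomputable def upstepsBefore (r : ℕ) (w : List Bool) : ℕ :=
  {p : ℕ | p < w.length ∧ p < 2 * r ∧ w.getD p false = true}.ncard

/-- Number of peaks of `w`: occurrences of the factor `u d`. -/
noncomputable def numPeaks (w : List Bool) : ℕ :=
  {i : ℕ | i + 2 ≤ w.length ∧ w.getD i false = true ∧ w.getD (i + 1) true = false}.ncard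

/-- Number of occurrences in `w` of a factor of length 3 beginning with `u`
and ending with `d` (occurrences of `u⋆d`). -/
noncomputable def numUStarD (w : List Bool) : ℕ :=
  {i : ℕ | i + 3 ≤ w.length ∧ w.getD i false = true ∧ w.getD (i + 2) true = false}.ncard

/-- `ih(w)`: 1 if `w` begins with the factor `u d`, else 0. -/
noncomputable def initHill (w : List Bool) : ℕ :=
  if w.take 2 = [true, false] then 1 else 0

/-- `fh(w)`: 1 if `w = X u d` with `X` a Dyck word, else 0. -/
noncomputable def finHill (w : List Bool) : ℕ :=
  if ∃ X : List Bool, IsDyck X ∧ w = X ++ [true, false] then 1 else 0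

/-- `π` avoids the pattern 321. -/
def Avoids321 {n : ℕ} (π : Equiv.Perm (Fin n)) : Prop :=
  ¬ ∃ i j k : Fin n, i < j ∧ j < k ∧ π k < π j ∧ π j < π i

/-- `π` avoids the pattern 132. -/
def Avoids132 {n : ℕ} (π : Equiv.Perm (Fin n)) : Prop :=
  ¬ ∃ i j k : Fin n, i < j ∧ j < k ∧ π i < π k ∧ π k < π j

/-- Number of fixed points of `π`. -/
noncomputable def fixedPts {n : ℕ} (π : Equiv.Perm (Fin n)) : ℕ :=
  {i : Fin n | π i = i}.ncard

/-- Number of excedances of `π`. -/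
noncomputable def excedances {n : ℕ} (π : Equiv.Perm (Fin n)) : ℕ :=
  {i : Fin n | i < π i}.ncard

/-- Number of descents of `π`. -/
noncomputable def descents {n : ℕ} (π : Equiv.Perm (Fin n)) : ℕ :=
  {i : ℕ | ∃ (h1 : i < n) (h2 : i + 1 < n), π ⟨i + 1, h2⟩ < π ⟨i, h1⟩}.ncard

/-- `α_r(π) = #{i : π(i) = i + r}` (stated 0-indexed, equivalent to the 1-indexed version). -/
noncomputable def alphaStat {n : ℕ} (r : ℕ) (π : Equiv.Perm (Fin n)) : ℕ :=
  {i : Fin n | (π i : ℕ) = (i : ℕ) + r}.ncard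

/-- `β_r(π) = #{i : i > r, π(i) = i}` (for 1-indexed `i`; 0-indexed this is `r ≤ i`). -/
noncomputable def betaStat {n : ℕ} (r : ℕ) (π : Equiv.Perm (Fin n)) : ℕ :=
  {i : Fin n | r ≤ (i : ℕ) ∧ π i = i}.ncard


/-! ### Heights -/

def fB (l : List Bool) : ℤ := (l.count true : ℤ) - (l.count false : ℤ)

def ht (w : List Bool) (k : ℕ) : ℤ := fB (w.take k)

lemma fB_append (a b : List Bool) : fB (a ++ b) = fB a + fB b := by
  simp [fB, List.count_append]; ring

lemma fB_nonneg_iff (l : List Bool) : 0 ≤ fB l ↔ l.count false ≤ l.count true := by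
  rw [fB, sub_nonneg]; exact Nat.cast_le

lemma fB_single (b : Bool) : fB [b] = if b then 1 else -1 := by
  cases b <;> simp [fB]

lemma isDyck_iff (w : List Bool) :
    IsDyck w ↔ fB w = 0 ∧ ∀ k, 0 ≤ ht w k := by
  constructor
  · rintro ⟨h1, h2⟩
    refine ⟨by simp [fB, h1], fun k => ?_⟩
    rw [ht, fB_nonneg_iff]
    exact h2 _ (List.take_prefix _ _)
  · rintro ⟨h1, h2⟩
    constructor
    · simp only [fB] at h1; omega
    · intro p hp
      rw [List.prefix_iff_eq_take] at hp
      rw [← fB_nonneg_iff, hp]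
      exact h2 _

lemma ht_zero (w : List Bool) : ht w 0 = 0 := by simp [ht, fB]

lemma ht_succ (w : List Bool) {k : ℕ} (h : k < w.length) :
    ht w (k + 1) = ht w k + (if w[k] then 1 else -1) := by
  rw [ht, List.take_succ, List.getElem?_eq_getElem h]
  simp only [Option.toList_some, fB_append, fB_single, ht]

lemma ht_length {w : List Bool} (hw : IsDyck w) : ht w w.length = 0 := by
  rw [ht, List.take_length]; exact ((isDyck_iff w).1 hw).1

lemma ht_nonneg {w : List Bool} (hw : IsDyck w) (k : ℕ) : 0 ≤ ht w k :=
  ((isDyck_iff w).1 hw).2 k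

/-! ### Characterization of `Matched` via heights -/

lemma matched_iff (w : List Bool) (i j : ℕ) :
    Matched w i j ↔ i < j ∧ j < w.length ∧ w.getD i false = true ∧
      w.getD j true = false ∧ ht w (j + 1) = ht w i ∧
      ∀ k, i < k → k ≤ j → ht w i < ht w k := by
  constructor
  · rintro ⟨A, B, C, hB, hw, hA, hj⟩
    have hlen : w.length = A.length + B.length + C.length + 2 := by
      subst hw; simp; omega
    have hij : i < j := by omega
    have hjl : j < w.length := by omega
    have hw2 : w = (A ++ true :: B) ++ false :: C := by
      subst hw; simp
    have htake : ∀ t ≤ B.length, w.take (i + 1 + t) = A ++ true :: B.take t := by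
      intro t htc
      subst hw hA
      rw [List.take_append, List.take_of_length_le (by omega),
        show A.length + 1 + t - A.length = t + 1 by omega, List.take_succ_cons,
        List.take_append, show t - B.length = 0 by omega]
      simp
    have htakej : w.take (j + 1) = A ++ true :: (B ++ [false]) := by
      subst hw hA hj
      rw [show A.length + B.length + 1 + 1 = A.length + 1 + (B.length + 1) by omega,
        List.take_append, List.take_of_length_le (by omega),
        show A.length + 1 + (B.length + 1) - A.length = (B.length + 1) + 1 by omega,
        List.take_succ_cons, List.take_append,
        List.take_of_length_le (by omega),
        show B.length + 1 - B.length = 1 by omega]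
      simp
    have htA : ht w i = fB A := by
      rw [ht]; subst hw hA; rw [List.take_left]
    have hcons : ∀ (l : List Bool), fB (true :: l) = 1 + fB l := by
      intro l
      rw [show (true :: l) = [true] ++ l from rfl, fB_append, fB_single]
      simp
    have hhk : ∀ t ≤ B.length, ht w (i + 1 + t) = fB A + 1 + fB (B.take t) := by
      intro t htc
      rw [ht, htake t htc, fB_append, hcons]; ring
    have hBf : fB B = 0 := by
      have := hB.1; simp only [fB]; omega
    refine ⟨hij, hjl, ?_, ?_, ?_, ?_⟩
    · rw [List.getD_eq_getElem _ _ (by omega)]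
      subst hw hA
      rw [List.getElem_append_right (le_refl _)]
      simp
    · rw [List.getD_eq_getElem _ _ hjl]
      have hj' : j = (A ++ true :: B).length := by simp; omega
      have : w[j]'hjl = ((A ++ true :: B) ++ false :: C)[j]'(by rw [← hw2]; exact hjl) := by
        congr 1
      rw [this]
      subst hj'
      rw [List.getElem_append_right (le_refl _)]
      simp
    · rw [ht, htakej, fB_append, hcons, fB_append, hBf, fB_single, htA]
      simp
    · intro k hk1 hk2
      have ht0 : k - i - 1 ≤ B.length := by omega
      have h2 := hhk (k - i - 1) ht0
      rw [show i + 1 + (k - i - 1) = k by omega] at h2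
      have h3 : 0 ≤ fB (B.take (k - i - 1)) := by
        rw [fB_nonneg_iff]
        exact hB.2 _ (List.take_prefix _ _)
      rw [h2, htA]
      omega
  · rintro ⟨hij, hjl, hgi, hgj, hht, hmid⟩
    have hil : i < w.length := lt_trans hij hjl
    have hgi' : w[i] = true := by rwa [List.getD_eq_getElem _ _ hil] at hgi
    have hgj' : w[j] = false := by rwa [List.getD_eq_getElem _ _ hjl] at hgj
    have hsucci : ht w (i + 1) = ht w i + 1 := by
      rw [ht_succ w hil, hgi']; simp
    have hsuccj : ht w (j + 1) = ht w j + -1 := by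
      rw [ht_succ w hjl, hgj']; simp
    have hhtj : ht w j = ht w i + 1 := by omega
    have hlenB : ((w.take j).drop (i + 1)).length = j - i - 1 := by
      rw [List.length_drop, List.length_take]; omega
    have htk : ∀ t, t ≤ j - i - 1 →
        w.take (i + 1 + t) = w.take (i + 1) ++ ((w.take j).drop (i + 1)).take t := by
      intro t htc
      rw [List.take_add]
      congr 1
      rw [List.drop_take, List.take_take, min_eq_left (by omega)]
    have hfBt : ∀ t, t ≤ j - i - 1 →
        fB (((w.take j).drop (i + 1)).take t) = ht w (i + 1 + t) - ht w (i + 1) := by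
      intro t htc
      have := htk t htc
      have h2 : ht w (i + 1 + t) = ht w (i + 1) + fB (((w.take j).drop (i + 1)).take t) := by
        rw [ht, this, fB_append, ht]
      omega
    have hfull : fB ((w.take j).drop (i + 1)) = 0 := by
      have := hfBt (j - i - 1) (le_refl _)
      rw [show i + 1 + (j - i - 1) = j by omega] at this
      rw [List.take_of_length_le (le_of_eq hlenB)] at this
      omega
    refine ⟨w.take i, (w.take j).drop (i + 1), w.drop (j + 1), ?_, ?_, ?_, ?_⟩
    · rw [isDyck_iff]
      refine ⟨hfull, fun k => ?_⟩
      rcases Nat.lt_or_ge k (j - i - 1) with h | h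
      · have h1 := hfBt k (by omega)
        have h2 := hmid (i + 1 + k) (by omega) (by omega)
        rcases Nat.eq_zero_or_pos k with h0 | h0
        · subst h0; simp [ht, fB]
        · rw [ht, h1]
          have := hmid (i + 1 + k) (by omega) (by omega)
          omega
      · rw [ht, List.take_of_length_le (by omega), hfull]
    · conv_lhs => rw [← List.take_append_drop i w]
      congr 1
      rw [List.drop_eq_getElem_cons hil, hgi']
      congr 1
      conv_lhs => rw [← List.take_append_drop j w]
      rw [List.drop_append, List.length_take, min_eq_left (by omega),
        show i + 1 - j = 0 by omega, List.drop_zero,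
        List.drop_eq_getElem_cons hjl, hgj']
    · simp; omega
    · simp; omega

/-! ### The match function -/

lemma matchPair_symm {w : List Bool} {i j : ℕ} (h : MatchPair w i j) : MatchPair w j i :=
  h.symm

lemma matched_lt {w : List Bool} {i j : ℕ} (h : Matched w i j) : i < j :=
  ((matched_iff w i j).1 h).1

lemma matched_lt_length {w : List Bool} {i j : ℕ} (h : Matched w i j) :
    i < w.length ∧ j < w.length := by
  have h' := (matched_iff w i j).1 h
  exact ⟨lt_trans h'.1 h'.2.1, h'.2.1⟩

lemma matchPair_lt_length {w : List Bool} {i j : ℕ} (h : MatchPair w i j) :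
    i < w.length ∧ j < w.length ∧ i ≠ j := by
  rcases h with h | h
  · exact ⟨(matched_lt_length h).1, (matched_lt_length h).2, Nat.ne_of_lt (matched_lt h)⟩
  · exact ⟨(matched_lt_length h).2, (matched_lt_length h).1, (Nat.ne_of_lt (matched_lt h)).symm⟩

lemma matched_getD_left {w : List Bool} {i j : ℕ} (h : Matched w i j) :
    w.getD i false = true :=
  ((matched_iff w i j).1 h).2.2.1

lemma matched_getD_right {w : List Bool} {i j : ℕ} (h : Matched w i j) :
    w.getD j true = false :=
  ((matched_iff w i j).1 h).2.2.2.1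

/-- Uniqueness of the matched partner. -/
lemma matchPair_unique {w : List Bool} {i j k : ℕ}
    (h1 : MatchPair w i j) (h2 : MatchPair w i k) : j = k := by
  by_contra hne
  -- wlog via symmetric handling
  have key : ∀ a b : ℕ, Matched w i a → Matched w i b → a < b → False := by
    intro a b ha hb hab
    have ha' := (matched_iff w i a).1 ha
    have hb' := (matched_iff w i b).1 hb
    have := hb'.2.2.2.2.2 (a + 1) (by omega) (by omega)
    rw [ha'.2.2.2.2.1] at this
    exact lt_irrefl _ this
  have key2 : ∀ a b : ℕ, Matched w a i → Matched w b i → a < b → False := by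
    intro a b ha hb hab
    have ha' := (matched_iff w a i).1 ha
    have hb' := (matched_iff w b i).1 hb
    -- ht w b = ht w (i+1) = ht w a, but b ∈ (a, i] so ht w a < ht w b;
    -- also ht w (i+1) = ht w a and ht w (i+1) = ht w b... derive heights
    -- From char: ht w (i+1) = ht w a and ht w (i+1) = ht w b.
    have e1 : ht w (i + 1) = ht w a := ha'.2.2.2.2.1
    have e2 : ht w (i + 1) = ht w b := hb'.2.2.2.2.1
    have := ha'.2.2.2.2.2 b (by omega) (by omega)
    omega
  rcases h1 with h1 | h1 <;> rcases h2 with h2 | h2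
  · rcases Nat.lt_trichotomy j k with h | h | h
    · exact key j k h1 h2 h
    · exact hne h
    · exact key k j h2 h1 h
  · have hl := (matched_lt_length h1).1
    have ha := matched_getD_left h1
    have hb2 := matched_getD_right h2
    rw [List.getD_eq_getElem _ _ hl] at ha hb2
    rw [ha] at hb2; exact absurd hb2 (by simp)
  · have hl := (matched_lt_length h2).1
    have ha := matched_getD_left h2
    have hb2 := matched_getD_right h1
    rw [List.getD_eq_getElem _ _ hl] at ha hb2
    rw [ha] at hb2; exact absurd hb2 (by simp)
  · rcases Nat.lt_trichotomy j k with h | h | h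
    · exact key2 j k h1 h2 h
    · exact hne h
    · exact key2 k j h2 h1 h

/-- Existence of the matched partner, for Dyck words. -/
lemma matchPair_exists {w : List Bool} (hw : IsDyck w) {i : ℕ} (hi : i < w.length) :
    ∃ j, MatchPair w i j := by
  by_cases hb : w[i] = true
  case neg =>
    rw [Bool.not_eq_true] at hb
    -- i is a down-step: search to the left
    have hgi : w[i] = false := hb
    have hi1 : ht w (i + 1) = ht w i + -1 := by rw [ht_succ w hi, hgi]; simp
    set P : ℕ → Prop := fun t => ht w t ≤ ht w (i + 1) with hP
    have hP0 : P 0 := by rw [hP]; simp [ht_zero]; exact ht_nonneg hw (i + 1)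
    set t0 := Nat.findGreatest P i with ht0
    have hPt0 : P t0 := Nat.findGreatest_spec (Nat.zero_le i) hP0
    have ht0i : t0 ≤ i := Nat.findGreatest_le i
    have hmax : ∀ k, t0 < k → k ≤ i → ht w (i + 1) < ht w k := by
      intro k hk1 hk2
      have := Nat.findGreatest_is_greatest (P := P) hk1 hk2
      rw [hP] at this
      simp only [not_le] at this
      exact this
    have ht0ne : t0 ≠ i := by
      intro h
      have : P i := by rw [← h]; exact hPt0
      rw [hP] at this
      omega
    have ht0lt : t0 < i := lt_of_le_of_ne ht0i ht0ne
    have hup : ht w (t0 + 1) > ht w (i + 1) := hmax (t0 + 1) (by omega) (by omega)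
    have ht0l : t0 < w.length := by omega
    have hstep : ht w (t0 + 1) = ht w t0 + (if w[t0] then 1 else -1) := ht_succ w ht0l
    have hw0 : w[t0] = true := by
      by_contra hc
      rw [Bool.not_eq_true] at hc
      rw [hc] at hstep
      simp at hstep
      rw [hP] at hPt0
      omega
    rw [hw0] at hstep
    simp at hstep
    have heq : ht w t0 = ht w (i + 1) := by
      rw [hP] at hPt0
      omega
    refine ⟨t0, Or.inr ?_⟩
    rw [matched_iff]
    refine ⟨ht0lt, hi, by rw [List.getD_eq_getElem _ _ ht0l, hw0],
      by rw [List.getD_eq_getElem _ _ hi, hgi], by omega, ?_⟩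
    intro k hk1 hk2
    rw [heq]
    exact hmax k hk1 hk2
  case pos =>
    -- i is an up-step: search to the right
    have hgi : w[i] = true := hb
    have hi1 : ht w (i + 1) = ht w i + 1 := by rw [ht_succ w hi, hgi]; simp
    set P : ℕ → Prop := fun t => i < t ∧ ht w t ≤ ht w i with hP
    have hPL : P w.length := by
      rw [hP]
      exact ⟨hi, by rw [ht_length hw]; exact ht_nonneg hw i⟩
    have hex : ∃ t, P t := ⟨_, hPL⟩
    set t1 := Nat.find hex with ht1
    have hPt1 : P t1 := Nat.find_spec hex
    have hmin : ∀ k, k < t1 → ¬ P k := fun k hk => Nat.find_min hex hk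
    have hit1 : i < t1 := hPt1.1
    have ht1L : t1 ≤ w.length := by
      by_contra hc
      exact hmin w.length (by omega) hPL
    have hmid : ∀ k, i < k → k < t1 → ht w i < ht w k := by
      intro k hk1 hk2
      by_contra hc
      push_neg at hc
      exact hmin k hk2 ⟨hk1, hc⟩
    have ht1ne : t1 ≠ i + 1 := by
      intro h
      have := hPt1.2
      rw [h] at this
      omega
    set j := t1 - 1 with hj
    have hjl : j < w.length := by omega
    have hij : i < j := by omega
    have hhtj : ht w i < ht w j := hmid j hij (by omega)
    have hstep : ht w (j + 1) = ht w j + (if w[j] then 1 else -1) := ht_succ w hjl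
    have hj1 : j + 1 = t1 := by omega
    have hwj : w[j] = false := by
      by_contra hc
      rw [Bool.not_eq_false] at hc
      rw [hc] at hstep
      simp at hstep
      have := hPt1.2
      rw [← hj1] at this
      omega
    rw [hwj] at hstep
    simp at hstep
    have heq : ht w (j + 1) = ht w i := by
      have := hPt1.2
      rw [← hj1] at this
      omega
    refine ⟨j, Or.inl ?_⟩
    rw [matched_iff]
    refine ⟨hij, hjl, by rw [List.getD_eq_getElem _ _ hi, hgi],
      by rw [List.getD_eq_getElem _ _ hjl, hwj], heq, ?_⟩
    intro k hk1 hk2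
    rcases Nat.lt_or_ge k t1 with h | h
    · exact hmid k hk1 h
    · have : k = t1 := by omega
      rw [this, ← hj1, heq]
      omega

noncomputable def mf (w : List Bool) (i : ℕ) : ℕ :=
  if h : ∃ j, MatchPair w i j then h.choose else i

lemma mf_spec {w : List Bool} (hw : IsDyck w) {i : ℕ} (hi : i < w.length) :
    MatchPair w i (mf w i) := by
  have h := matchPair_exists hw hi
  rw [mf, dif_pos h]
  exact h.choose_spec

lemma mf_eq {w : List Bool} {i j : ℕ} (h : MatchPair w i j) : mf w i = j := by
  have hex : ∃ k, MatchPair w i k := ⟨j, h⟩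
  rw [mf, dif_pos hex]
  exact matchPair_unique hex.choose_spec h

lemma mf_mf {w : List Bool} (hw : IsDyck w) {i : ℕ} (hi : i < w.length) :
    mf w (mf w i) = i :=
  mf_eq (matchPair_symm (mf_spec hw hi))

lemma mf_lt_length {w : List Bool} (hw : IsDyck w) {i : ℕ} (hi : i < w.length) :
    mf w i < w.length :=
  (matchPair_lt_length (mf_spec hw hi)).2.1

lemma mf_ne {w : List Bool} (hw : IsDyck w) {i : ℕ} (hi : i < w.length) :
    mf w i ≠ i :=
  fun h => (matchPair_lt_length (mf_spec hw hi)).2.2 h.symm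

lemma mf_matched_of_lt {w : List Bool} (hw : IsDyck w) {i : ℕ} (hi : i < w.length)
    (h : i < mf w i) : Matched w i (mf w i) := by
  rcases mf_spec hw hi with h' | h'
  · exact h'
  · exact absurd (matched_lt h') (by omega)

lemma mf_matched_of_gt {w : List Bool} (hw : IsDyck w) {i : ℕ} (hi : i < w.length)
    (h : mf w i < i) : Matched w (mf w i) i := by
  rcases mf_spec hw hi with h' | h'
  · exact absurd (matched_lt h') (by omega)
  · exact h'

lemma getD_eq_true_iff_lt_mf {w : List Bool} (hw : IsDyck w) {i : ℕ} (hi : i < w.length) :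
    w.getD i false = true ↔ i < mf w i := by
  constructor
  · intro h
    rcases Nat.lt_trichotomy i (mf w i) with hc | hc | hc
    · exact hc
    · exact absurd hc.symm (mf_ne hw hi)
    · have h2 := matched_getD_right (mf_matched_of_gt hw hi hc)
      rw [List.getD_eq_getElem _ _ hi] at h2 h
      rw [h] at h2; simp at h2
  · intro h
    exact matched_getD_left (mf_matched_of_lt hw hi h)

/-! ### Non-crossing lemmas -/

lemma nested {w : List Bool} {i j k l : ℕ} (h1 : Matched w i j) (h2 : Matched w k l)
    (hik : i < k) (hkj : k ≤ j) : l ≤ j := by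
  by_contra hc
  push_neg at hc
  have h1' := (matched_iff w i j).1 h1
  have h2' := (matched_iff w k l).1 h2
  have e1 : ht w (j + 1) = ht w i := h1'.2.2.2.2.1
  have e2 : ht w k < ht w (j + 1) := h2'.2.2.2.2.2 (j + 1) (by omega) (by omega)
  have e3 : ht w i < ht w k := h1'.2.2.2.2.2 k hik hkj
  omega

lemma nested' {w : List Bool} {i j k l : ℕ} (h1 : Matched w i j) (h2 : Matched w k l)
    (hil : i ≤ l) (hlj : l ≤ j) : i ≤ k := by
  by_contra hc
  push_neg at hc
  have hkl := matched_lt h2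
  have := nested h2 h1 hc (by omega)
  have : l = j := le_antisymm hlj this
  subst this
  have := matchPair_unique (w := w) (i := l) (Or.inr h2) (Or.inr h1)
  omega

/-! ### Structure of the zigzag reading order -/

def Aa (r p : ℕ) : ℕ := if p ≤ 2 * r then p else 2 * r + (p - 2 * r + 1) / 2

def Bb (r L p : ℕ) : ℕ := L - (p - 2 * r) / 2

lemma Bb_le (r L p : ℕ) : Bb r L p ≤ L := Nat.sub_le _ _

lemma sumAB {r L p : ℕ} (hp : p ≤ L) : Aa r p + (L - Bb r L p) = p := by
  unfold Aa Bb
  split_ifs <;> omega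

/-- At each reading step, either the left end grows or the right end grows. -/
lemma zig_cases (r L p : ℕ) (hp : p < L) :
    (zigR r L p = Aa r p ∧ Aa r (p + 1) = Aa r p + 1 ∧ Bb r L (p + 1) = Bb r L p ∧
      Aa r p < Bb r L p) ∨
    (zigR r L p + 1 = Bb r L p ∧ Aa r (p + 1) = Aa r p ∧ Bb r L (p + 1) + 1 = Bb r L p ∧
      Aa r p < Bb r L p) := by
  by_cases h1 : p < 2 * r
  · left
    simp only [zigR, Aa, Bb, if_pos h1]
    split_ifs <;> omega
  · by_cases h2 : p % 2 = 0
    · left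
      simp only [zigR, Aa, Bb, if_neg h1, if_pos h2]
      split_ifs <;> omega
    · right
      simp only [zigR, Aa, Bb, if_neg h1, if_neg h2]
      split_ifs <;> omega

lemma zig_lt (r : ℕ) {L p : ℕ} (hp : p < L) : zigR r L p < L := by
  rcases zig_cases r L p hp with ⟨h1, _, _, h4⟩ | ⟨h1, _, _, h4⟩
  · rw [h1]; exact lt_of_lt_of_le h4 (Bb_le r L p)
  · have := Bb_le r L p; omega

def InS (r L p x : ℕ) : Prop := ∃ p' : ℕ, p' < p ∧ zigR r L p' = x

lemma InS_mono {r L p q x : ℕ} (hpq : p ≤ q) (h : InS r L p x) : InS r L q x := by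
  obtain ⟨p', h1, h2⟩ := h
  exact ⟨p', by omega, h2⟩

lemma InS_succ {r L p x : ℕ} : InS r L (p + 1) x ↔ InS r L p x ∨ x = zigR r L p := by
  constructor
  · rintro ⟨p', h1, h2⟩
    rcases Nat.lt_or_ge p' p with h | h
    · exact Or.inl ⟨p', h, h2⟩
    · have : p' = p := by omega
      subst this
      exact Or.inr h2.symm
  · rintro (⟨p', h1, h2⟩ | h)
    · exact ⟨p', by omega, h2⟩
    · exact ⟨p, by omega, h.symm⟩

lemma InS_iff {r L : ℕ} : ∀ {p : ℕ}, p ≤ L → ∀ x,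
    InS r L p x ↔ (x < Aa r p ∨ (Bb r L p ≤ x ∧ x < L)) := by
  intro p
  induction p with
  | zero =>
    intro _ x
    constructor
    · rintro ⟨p', h1, _⟩; omega
    · rintro (h | ⟨h1, h2⟩)
      · simp [Aa] at h
      · simp [Bb] at h1; omega
  | succ p ih =>
    intro hp x
    have hpL : p < L := by omega
    have hBle := Bb_le r L p
    rw [InS_succ, ih (by omega) x]
    rcases zig_cases r L p hpL with ⟨h1, h2, h3, h4⟩ | ⟨h1, h2, h3, h4⟩ <;> omega

lemma not_InS_self {r L p : ℕ} (hp : p < L) : ¬ InS r L p (zigR r L p) := by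
  intro h
  rw [InS_iff (by omega) _] at h
  rcases zig_cases r L p hp with ⟨h1, _, _, h4⟩ | ⟨h1, _, _, h4⟩ <;> omega

lemma InS_full {r L x : ℕ} (hx : x < L) : InS r L L x := by
  rw [InS_iff (le_refl L) x]
  have h1 := sumAB (r := r) (L := L) (p := L) (le_refl L)
  have h2 := Bb_le r L L
  omega

lemma zig_inj {r L p q : ℕ} (hp : p < L) (hq : q < L) (h : zigR r L p = zigR r L q) :
    p = q := by
  rcases Nat.lt_trichotomy p q with hc | hc | hc
  · exact absurd ⟨p, hc, h⟩ (not_InS_self hq)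
  · exact hc
  · exact absurd ⟨q, hc, h.symm⟩ (not_InS_self hp)

/-! ### Basic facts about `psiR` -/

lemma psiR_length (r : ℕ) (w : List Bool) : (psiR r w).length = w.length := by
  simp [psiR]

lemma psiR_getElem {w : List Bool} (hw : IsDyck w) (r : ℕ) {p : ℕ} (hp : p < w.length) :
    (psiR r w)[p]'(by rw [psiR_length]; exact hp) =
      if InS r w.length p (mf w (zigR r w.length p)) then false else true := by
  have hiff : (∃ p' : ℕ, p' < p ∧ MatchPair w (zigR r w.length p') (zigR r w.length p)) ↔
      InS r w.length p (mf w (zigR r w.length p)) := by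
    constructor
    · rintro ⟨p', h1, h2⟩
      exact ⟨p', h1, (mf_eq (matchPair_symm h2)).symm⟩
    · rintro ⟨p', h1, h2⟩
      refine ⟨p', h1, ?_⟩
      have := mf_spec hw (zig_lt r hp)
      rw [← h2] at this
      exact matchPair_symm this
  simp only [psiR, List.getElem_ofFn]
  exact if_congr hiff rfl rfl

/-! ### `psiR` preserves Dyck words -/

/-- The set of read positions whose partner is still unread. -/
noncomputable def Ofin (r : ℕ) (w : List Bool) (p : ℕ) : Finset ℕ :=
  (Finset.range w.length).filter
    (fun x => InS r w.length p x ∧ ¬ InS r w.length p (mf w x))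

lemma psiR_take_succ {w : List Bool} (r : ℕ) {p : ℕ} (hp : p < w.length) :
    (psiR r w).take (p + 1) =
      (psiR r w).take p ++ [(psiR r w)[p]'(by rw [psiR_length]; exact hp)] := by
  rw [List.take_succ, List.getElem?_eq_getElem (by rw [psiR_length]; exact hp)]
  simp

lemma count_take_psiR {w : List Bool} (hw : IsDyck w) (r : ℕ) :
    ∀ p, p ≤ w.length →
      ((psiR r w).take p).count true =
        ((psiR r w).take p).count false + (Ofin r w p).card := by
  intro p
  induction p with
  | zero =>
    intro _
    have : Ofin r w 0 = ∅ := by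
      ext x
      simp only [Ofin, Finset.mem_filter, Finset.mem_range, Finset.notMem_empty, iff_false]
      rintro ⟨-, ⟨p', h1, -⟩, -⟩
      omega
    simp [this]
  | succ p ih =>
    intro hp
    have hpL : p < w.length := by omega
    set L := w.length with hL
    set x0 := zigR r L p with hx0def
    set y0 := mf w x0 with hy0def
    have hx0 : x0 < L := zig_lt r hpL
    have hy0 : y0 < L := mf_lt_length hw hx0
    have hmfy0 : mf w y0 = x0 := mf_mf hw hx0
    have hx0y0 : y0 ≠ x0 := mf_ne hw hx0
    have hgetp := psiR_getElem hw r hpL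
    rw [psiR_take_succ r hpL, List.count_append, List.count_append]
    by_cases hin : InS r L p y0
    · -- the letter is a down-step; the pair (y0, x0) gets closed
      rw [hgetp, if_pos hin]
      have hOeq : Ofin r w (p + 1) = (Ofin r w p).erase y0 := by
        ext x
        simp only [Ofin, Finset.mem_filter, Finset.mem_range, Finset.mem_erase]
        constructor
        · rintro ⟨hxL, hx1, hx2⟩
          rw [InS_succ] at hx1 hx2
          push_neg at hx2
          have hxne : x ≠ x0 := by
            intro h
            exact hx2.1 (by rw [h]; exact hin)
          have hIx : InS r L p x := by
            rcases hx1 with h | h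
            · exact h
            · exact absurd h hxne
          refine ⟨?_, hxL, hIx, hx2.1⟩
          intro h
          rw [h] at hx2
          exact hx2.2 hmfy0
        · rintro ⟨hne, hxL, hx1, hx2⟩
          refine ⟨hxL, InS_mono (by omega) hx1, ?_⟩
          rw [InS_succ]
          push_neg
          refine ⟨hx2, ?_⟩
          intro h
          have : x = y0 := by
            rw [← mf_mf hw (show x < w.length by omega), h]
          exact hne this
      have hy0mem : y0 ∈ Ofin r w p := by
        simp only [Ofin, Finset.mem_filter, Finset.mem_range]
        exact ⟨hy0, hin, by rw [hmfy0]; exact not_InS_self hpL⟩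
      rw [hOeq, Finset.card_erase_of_mem hy0mem]
      have hcard : 1 ≤ (Ofin r w p).card := Finset.card_pos.2 ⟨y0, hy0mem⟩
      have hihh := ih (by omega)
      simp only [List.count_singleton, List.count_nil, List.count_cons]
      simp only [beq_iff_eq]
      norm_num
      omega
    · -- the letter is an up-step; the pair (x0, mf x0) opens
      rw [hgetp, if_neg hin]
      have hOeq : Ofin r w (p + 1) = insert x0 (Ofin r w p) := by
        ext x
        simp only [Ofin, Finset.mem_filter, Finset.mem_range, Finset.mem_insert]
        constructor
        · rintro ⟨hxL, hx1, hx2⟩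
          rw [InS_succ] at hx1 hx2
          push_neg at hx2
          rcases hx1 with h | h
          · exact Or.inr ⟨hxL, h, hx2.1⟩
          · exact Or.inl h
        · rintro (h | ⟨hxL, hx1, hx2⟩)
          · subst h
            refine ⟨hx0, by rw [InS_succ]; exact Or.inr rfl, ?_⟩
            rw [InS_succ]
            push_neg
            exact ⟨hin, hx0y0⟩
          · refine ⟨hxL, InS_mono (by omega) hx1, ?_⟩
            rw [InS_succ]
            push_neg
            refine ⟨hx2, ?_⟩
            intro h
            have : x = y0 := by
              rw [← mf_mf hw (show x < w.length by omega), h]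
            subst this
            exact hin hx1
      have hx0notmem : x0 ∉ Ofin r w p := by
        simp only [Ofin, Finset.mem_filter, Finset.mem_range]
        rintro ⟨-, h, -⟩
        exact not_InS_self hpL h
      rw [hOeq, Finset.card_insert_of_notMem hx0notmem]
      have hihh := ih (by omega)
      simp only [List.count_singleton, List.count_nil, List.count_cons]
      simp only [beq_iff_eq]
      norm_num
      omega

lemma Ofin_full {w : List Bool} (hw : IsDyck w) (r : ℕ) : Ofin r w w.length = ∅ := by
  ext x
  simp only [Ofin, Finset.mem_filter, Finset.mem_range, Finset.notMem_empty, iff_false]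
  rintro ⟨hxL, -, h2⟩
  exact h2 (InS_full (mf_lt_length hw hxL))

lemma psiR_isDyck {w : List Bool} (hw : IsDyck w) (r : ℕ) : IsDyck (psiR r w) := by
  constructor
  · have h := count_take_psiR hw r w.length (le_refl _)
    have ht : (psiR r w).take w.length = psiR r w := by
      rw [← psiR_length r w, List.take_length]
    rw [ht, Ofin_full hw r] at h
    simpa using h.symm
  · intro q hq
    have hlen : q.length ≤ w.length := le_trans hq.length_le (le_of_eq (psiR_length r w))
    rw [List.prefix_iff_eq_take] at hq
    have h := count_take_psiR hw r q.length hlen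
    rw [← hq] at h
    omega

/-! ### Forced partner lemmas -/

/-- The read region `[0,a) ∪ [c,L)`. -/
def Rng (a c L x : ℕ) : Prop := x < a ∨ (c ≤ x ∧ x < L)

/-- Open positions: read, but with unread partner. -/
def Op (w : List Bool) (a c L z : ℕ) : Prop :=
  Rng a c L z ∧ ¬ Rng a c L (mf w z)

lemma Op_lt {w : List Bool} {a c L z : ℕ} (hcL : c ≤ L) (h : Op w a c L z) (hac : a < c) :
    z < L := by
  rcases h.1 with h' | h' <;> omega

/-- For `z` open and not the partner of the new position `x0`, the partner of `z`
lies strictly inside the unread middle region. -/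
lemma Op_partner {w : List Bool} (hw : IsDyck w) {a c L x0 z : ℕ}
    (hL : w.length = L) (hac : a < c) (hcL : c ≤ L)
    (hx0a : a ≤ x0) (hx0c : x0 < c) (hx0 : Rng a c L (mf w x0))
    (hz : Op w a c L z) (hne : z ≠ mf w x0) :
    a ≤ mf w z ∧ mf w z < c ∧ mf w z ≠ x0 := by
  have hzL : z < w.length := by rw [hL]; exact Op_lt hcL hz hac
  have hmzL : mf w z < L := by rw [← hL]; exact mf_lt_length hw hzL
  have h2 := hz.2
  rw [Rng] at h2
  push_neg at h2
  refine ⟨h2.1, by omega, ?_⟩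
  intro h
  have hx0L : x0 < w.length := by omega
  apply hne
  rw [← mf_mf hw hzL, h]

lemma mf_Op_left {w : List Bool} (hw : IsDyck w) {a c L : ℕ}
    (hL : w.length = L) (hac : a < c) (hcL : c ≤ L)
    (ha : Rng a c L (mf w a)) : Op w a c L (mf w a) := by
  have haL : a < w.length := by omega
  refine ⟨ha, ?_⟩
  rw [mf_mf hw haL, Rng]
  omega

lemma mf_Op_right {w : List Bool} (hw : IsDyck w) {a c L x0 : ℕ}
    (hL : w.length = L) (hac : a < c) (hcL : c ≤ L) (hx0 : x0 + 1 = c) (hax0 : a ≤ x0)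
    (ha : Rng a c L (mf w x0)) : Op w a c L (mf w x0) := by
  have hx0L : x0 < w.length := by omega
  refine ⟨ha, ?_⟩
  rw [mf_mf hw hx0L, Rng]
  omega

lemma forced_left {w : List Bool} (hw : IsDyck w) {a c L : ℕ}
    (hL : w.length = L) (hac : a < c) (hcL : c ≤ L)
    (ha : Rng a c L (mf w a)) :
    (∀ z, Op w a c L z → z < a → mf w a < a ∧ z ≤ mf w a) ∧
    ((∀ z, Op w a c L z → a ≤ z) → ∀ z, Op w a c L z → z ≤ mf w a) := by
  have haL : a < w.length := by omega
  have hyOp : Op w a c L (mf w a) := mf_Op_left hw hL hac hcL ha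
  have hmya : mf w (mf w a) = a := mf_mf hw haL
  constructor
  · intro z hz hza
    have hzy : z ≠ mf w a ∨ z = mf w a := (ne_or_eq _ _)
    have hya : mf w a < a := by
      by_contra hge
      push_neg at hge
      have hyc : c ≤ mf w a := by rcases ha with h | h; omega; exact h.1
      have hzne : z ≠ mf w a := by omega
      obtain ⟨hp1, hp2, hp3⟩ := Op_partner hw hL hac hcL (le_refl a) hac ha hz hzne
      -- pairs (z, mf z) and (a, mf a): z < a < mf z < mf a : crossing
      have hm1 : Matched w z (mf w z) := mf_matched_of_lt hw
        (by rw [hL]; exact Op_lt hcL hz hac) (by omega)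
      have hm2 : Matched w a (mf w a) := mf_matched_of_lt hw haL (by omega)
      have := nested hm1 hm2 (by omega) (by omega)
      omega
    constructor
    · exact hya
    · rcases hzy.symm with h | h
      · omega
      · by_contra hlt
        push_neg at hlt
        obtain ⟨hp1, hp2, hp3⟩ := Op_partner hw hL hac hcL (le_refl a) hac ha hz h
        -- pairs (mf a, a) and (z, mf z) with mf a < z < a ≤ mf z : crossing
        have hm1 : Matched w (mf w a) a := by
          have := mf_matched_of_lt hw (by omega : mf w a < w.length) (by rw [hmya]; omega)
          rwa [hmya] at this
        have hm2 : Matched w z (mf w z) := mf_matched_of_lt hw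
          (by rw [hL]; exact Op_lt hcL hz hac) (by omega)
        have := nested hm1 hm2 (by omega) (by omega)
        omega
  · intro hO z hz
    have hyge : a ≤ mf w a := hO _ hyOp
    have hyc : c ≤ mf w a := by rcases ha with h | h; omega; exact h.1
    rcases ne_or_eq z (mf w a) with h | h
    · by_contra hlt
      push_neg at hlt
      obtain ⟨hp1, hp2, hp3⟩ := Op_partner hw hL hac hcL (le_refl a) hac ha hz h
      -- pairs (a, mf a) and (mf z, z) with a < mf z ≤ mf a < z : crossing
      have hm1 : Matched w a (mf w a) := mf_matched_of_lt hw haL (by omega)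
      have hm2 : Matched w (mf w z) z := mf_matched_of_gt hw
        (by rw [hL]; exact Op_lt hcL hz hac) (by omega)
      have := nested hm1 hm2 (by omega) (by omega)
      omega
    · omega

lemma forced_right {w : List Bool} (hw : IsDyck w) {a c L x0 : ℕ}
    (hL : w.length = L) (hac : a < c) (hcL : c ≤ L) (hx0 : x0 + 1 = c) (hax0 : a ≤ x0)
    (ha : Rng a c L (mf w x0)) :
    (∀ z, Op w a c L z → c ≤ z → c ≤ mf w x0 ∧ mf w x0 ≤ z) ∧
    ((∀ z, Op w a c L z → z < c) → ∀ z, Op w a c L z → mf w x0 ≤ z) := by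
  have hx0L : x0 < w.length := by omega
  have hyOp : Op w a c L (mf w x0) := mf_Op_right hw hL hac hcL hx0 hax0 ha
  have hmy : mf w (mf w x0) = x0 := mf_mf hw hx0L
  have hyne : mf w x0 ≠ x0 := mf_ne hw hx0L
  constructor
  · intro z hz hzc
    have hyc : c ≤ mf w x0 := by
      by_contra hlt
      push_neg at hlt
      have hya : mf w x0 < a := by rcases ha with h | h; exact h; omega
      have hzne : z ≠ mf w x0 := by omega
      obtain ⟨hp1, hp2, hp3⟩ := Op_partner hw hL hac hcL hax0 (by omega) ha hz hzne
      -- pairs (mf x0, x0) and (mf z, z) with mf x0 < mf z ≤ x0 < z : crossing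
      have hm1 : Matched w (mf w x0) x0 := by
        have := mf_matched_of_lt hw (by omega : mf w x0 < w.length) (by rw [hmy]; omega)
        rwa [hmy] at this
      have hm2 : Matched w (mf w z) z := mf_matched_of_gt hw
        (by rw [hL]; exact Op_lt hcL hz (by omega)) (by omega)
      have := nested hm1 hm2 (by omega) (by omega)
      omega
    refine ⟨hyc, ?_⟩
    rcases ne_or_eq z (mf w x0) with h | h
    · by_contra hlt
      push_neg at hlt
      obtain ⟨hp1, hp2, hp3⟩ := Op_partner hw hL hac hcL hax0 (by omega) ha hz h
      -- pairs (x0, mf x0) and (mf z, z) with  mf z < x0 ≤ z < mf x0 : nested'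
      have hm1 : Matched w x0 (mf w x0) := mf_matched_of_lt hw hx0L (by omega)
      have hm2 : Matched w (mf w z) z := mf_matched_of_gt hw
        (by rw [hL]; exact Op_lt hcL hz (by omega)) (by omega)
      have := nested' hm1 hm2 (by omega) (by omega)
      omega
    · omega
  · intro hO z hz
    have hylt : mf w x0 < c := hO _ hyOp
    have hya : mf w x0 < a := by rcases ha with h | h; exact h; omega
    rcases ne_or_eq z (mf w x0) with h | h
    · by_contra hlt
      push_neg at hlt
      have hza : z < a := by
        have := hO z hz
        rcases hz.1 with h' | h' <;> omega
      obtain ⟨hp1, hp2, hp3⟩ := Op_partner hw hL hac hcL hax0 (by omega) ha hz h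
      -- pairs (mf x0, x0) and (z, mf z) with z < mf x0 ≤ ... : nested'
      have hm1 : Matched w (mf w x0) x0 := by
        have := mf_matched_of_lt hw (by omega : mf w x0 < w.length) (by rw [hmy]; omega)
        rwa [hmy] at this
      have hm2 : Matched w z (mf w z) := mf_matched_of_lt hw
        (by rw [hL]; exact Op_lt hcL hz (by omega)) (by omega)
      have := nested' hm1 hm2 (by omega) (by omega)
      omega
    · omega

/-- Two Dyck words with the same open set and new position must match it to
the same previously read position (left case: new position is `a`). -/
lemma forced_unique_left {w1 w2 : List Bool} (h1 : IsDyck w1) (h2 : IsDyck w2)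
    {a c L : ℕ} (hL1 : w1.length = L) (hL2 : w2.length = L) (hac : a < c) (hcL : c ≤ L)
    (hOp : ∀ z, Op w1 a c L z ↔ Op w2 a c L z)
    (ha1 : Rng a c L (mf w1 a)) (ha2 : Rng a c L (mf w2 a)) :
    mf w1 a = mf w2 a := by
  have hy1 : Op w1 a c L (mf w1 a) := mf_Op_left h1 hL1 hac hcL ha1
  have hy2 : Op w1 a c L (mf w2 a) := (hOp _).2 (mf_Op_left h2 hL2 hac hcL ha2)
  have f1 := forced_left h1 hL1 hac hcL ha1
  have f2 := forced_left h2 hL2 hac hcL ha2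
  by_cases hz : ∃ z, Op w1 a c L z ∧ z < a
  · obtain ⟨z0, hz0, hz0a⟩ := hz
    have e1 := f1.1 z0 hz0 hz0a
    have e2 := f2.1 z0 ((hOp _).1 hz0) hz0a
    have e3 := f1.1 _ hy2 e2.1
    have e4 := f2.1 _ ((hOp _).1 hy1) e1.1
    omega
  · push_neg at hz
    have hO1 : ∀ z, Op w1 a c L z → a ≤ z := fun z h => hz z h
    have hO2 : ∀ z, Op w2 a c L z → a ≤ z := fun z h => hz z ((hOp _).2 h)
    have e3 := f1.2 hO1 _ hy2
    have e4 := f2.2 hO2 _ ((hOp _).1 hy1)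
    omega

/-- Right case: new position is `c - 1`. -/
lemma forced_unique_right {w1 w2 : List Bool} (h1 : IsDyck w1) (h2 : IsDyck w2)
    {a c L x0 : ℕ} (hL1 : w1.length = L) (hL2 : w2.length = L) (hac : a < c) (hcL : c ≤ L)
    (hx0 : x0 + 1 = c) (hax0 : a ≤ x0)
    (hOp : ∀ z, Op w1 a c L z ↔ Op w2 a c L z)
    (ha1 : Rng a c L (mf w1 x0)) (ha2 : Rng a c L (mf w2 x0)) :
    mf w1 x0 = mf w2 x0 := by
  have hy1 : Op w1 a c L (mf w1 x0) := mf_Op_right h1 hL1 hac hcL hx0 hax0 ha1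
  have hy2 : Op w1 a c L (mf w2 x0) := (hOp _).2 (mf_Op_right h2 hL2 hac hcL hx0 hax0 ha2)
  have f1 := forced_right h1 hL1 hac hcL hx0 hax0 ha1
  have f2 := forced_right h2 hL2 hac hcL hx0 hax0 ha2
  by_cases hz : ∃ z, Op w1 a c L z ∧ c ≤ z
  · obtain ⟨z0, hz0, hz0c⟩ := hz
    have e1 := f1.1 z0 hz0 hz0c
    have e2 := f2.1 z0 ((hOp _).1 hz0) hz0c
    have e3 := f1.1 _ hy2 e2.1
    have e4 := f2.1 _ ((hOp _).1 hy1) e1.1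
    omega
  · push_neg at hz
    have hO1 : ∀ z, Op w1 a c L z → z < c := fun z h => hz z h
    have hO2 : ∀ z, Op w2 a c L z → z < c := fun z h => hz z ((hOp _).2 h)
    have e3 := f1.2 hO1 _ hy2
    have e4 := f2.2 hO2 _ ((hOp _).1 hy1)
    omega

/-! ### Injectivity of `psiR` on Dyck words -/

lemma InS_iff_Rng {r L p : ℕ} (hp : p ≤ L) (x : ℕ) :
    InS r L p x ↔ Rng (Aa r p) (Bb r L p) L x := by
  rw [Rng]; exact InS_iff hp x

lemma InS_lt {r L p x : ℕ} (hpL : p ≤ L) (h : InS r L p x) : x < L := by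
  obtain ⟨p', hp', he⟩ := h
  rw [← he]
  exact zig_lt r (by omega)

lemma psiR_inj {r : ℕ} {w1 w2 : List Bool} (h1 : IsDyck w1) (h2 : IsDyck w2)
    (hlen : w2.length = w1.length) (hpsi : psiR r w1 = psiR r w2) : w1 = w2 := by
  have hpt : ∀ p, p < w1.length →
      (InS r w1.length p (mf w1 (zigR r w1.length p)) ↔
       InS r w1.length p (mf w2 (zigR r w1.length p))) := by
    intro p hp
    have e1 := psiR_getElem h1 r hp
    have hp2 : p < w2.length := by omega
    have e2 := psiR_getElem h2 r hp2
    simp only [hlen] at e2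
    have e3 : (psiR r w1)[p]'(by rw [psiR_length]; exact hp) =
        (psiR r w2)[p]'(by rw [psiR_length]; exact hp2) := by
      exact List.getElem_of_eq hpsi _
    rw [e1, e2] at e3
    by_cases hP : InS r w1.length p (mf w1 (zigR r w1.length p)) <;>
      by_cases hQ : InS r w1.length p (mf w2 (zigR r w1.length p))
    · exact iff_of_true hP hQ
    · rw [if_pos hP, if_neg hQ] at e3; simp at e3
    · rw [if_neg hP, if_pos hQ] at e3; simp at e3
    · exact iff_of_false hP hQ
  have key : ∀ p, p ≤ w1.length → ∀ x, InS r w1.length p x →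
      ((InS r w1.length p (mf w1 x) ↔ InS r w1.length p (mf w2 x)) ∧
       (InS r w1.length p (mf w1 x) → mf w1 x = mf w2 x)) := by
    intro p
    induction p with
    | zero =>
      intro _ x hx
      obtain ⟨p', hp', -⟩ := hx
      omega
    | succ p ih =>
      intro hp x hx
      have hpL : p < w1.length := by omega
      have hzx0 : zigR r w1.length p < w1.length := zig_lt r hpL
      have hzx0' : zigR r w1.length p < w2.length := by omega
      have hm1L : mf w1 (zigR r w1.length p) < w1.length := mf_lt_length h1 hzx0
      have hm2L : mf w2 (zigR r w1.length p) < w2.length := mf_lt_length h2 hzx0'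
      have hne1 : mf w1 (zigR r w1.length p) ≠ zigR r w1.length p := mf_ne h1 hzx0
      have hne2 : mf w2 (zigR r w1.length p) ≠ zigR r w1.length p := mf_ne h2 hzx0'
      by_cases hcc : InS r w1.length p (mf w1 (zigR r w1.length p))
      · -- the new position closes a pair: partners forced equal
        have hcc2 : InS r w1.length p (mf w2 (zigR r w1.length p)) := (hpt p hpL).1 hcc
        have heq : mf w1 (zigR r w1.length p) = mf w2 (zigR r w1.length p) := by
          have hiz : ∀ y, InS r w1.length p y ↔
              Rng (Aa r p) (Bb r w1.length p) w1.length y :=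
            fun y => InS_iff_Rng (le_of_lt hpL) y
          have hRng1 := (hiz _).1 hcc
          have hRng2 := (hiz _).1 hcc2
          have hOp12 : ∀ z, Op w1 (Aa r p) (Bb r w1.length p) w1.length z ↔
              Op w2 (Aa r p) (Bb r w1.length p) w1.length z := by
            intro z
            constructor <;> rintro ⟨hr, hnr⟩ <;> refine ⟨hr, fun hcon => hnr ?_⟩
            · exact (hiz _).1 ((ih (by omega) z ((hiz z).2 hr)).1.2 ((hiz _).2 hcon))
            · exact (hiz _).1 ((ih (by omega) z ((hiz z).2 hr)).1.1 ((hiz _).2 hcon))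
          rcases zig_cases r w1.length p hpL with ⟨hz1, hz2, hz3, hz4⟩ | ⟨hz1, hz2, hz3, hz4⟩
          · rw [hz1] at hRng1 hRng2 ⊢
            exact forced_unique_left h1 h2 rfl hlen hz4 (Bb_le _ _ _) hOp12 hRng1 hRng2
          · exact forced_unique_right h1 h2 rfl hlen hz4 (Bb_le _ _ _) hz1
              (by omega) hOp12 hRng1 hRng2
        rcases InS_succ.1 hx with hxp | hxx0
        · have ihx := ih (by omega) x hxp
          have hxL : x < w1.length := InS_lt (by omega) hxp
          have hm1x : mf w1 x = zigR r w1.length p → x = mf w1 (zigR r w1.length p) := by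
            intro h; rw [← mf_mf h1 hxL, h]
          have hm2x : mf w2 x = zigR r w1.length p → x = mf w2 (zigR r w1.length p) := by
            intro h; rw [← mf_mf h2 (by omega : x < w2.length), h]
          have hm1x' : x = mf w1 (zigR r w1.length p) → mf w1 x = zigR r w1.length p := by
            intro h; rw [h, mf_mf h1 hzx0]
          have hm2x' : x = mf w2 (zigR r w1.length p) → mf w2 x = zigR r w1.length p := by
            intro h; rw [h, mf_mf h2 hzx0']
          constructor
          · rw [InS_succ, InS_succ]
            constructor
            · rintro (h | h)
              · exact Or.inl (ihx.1.1 h)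
              · exact Or.inr (hm2x' (heq ▸ hm1x h))
            · rintro (h | h)
              · exact Or.inl (ihx.1.2 h)
              · exact Or.inr (hm1x' (heq ▸ hm2x h))
          · intro hin
            rcases InS_succ.1 hin with h | h
            · exact ihx.2 h
            · rw [h, hm2x' (heq ▸ hm1x h)]
        · subst hxx0
          constructor
          · exact iff_of_true (InS_succ.2 (Or.inl hcc)) (InS_succ.2 (Or.inl hcc2))
          · intro _; exact heq
      · -- the new position opens a pair
        have hcc2 : ¬ InS r w1.length p (mf w2 (zigR r w1.length p)) :=
          fun h => hcc ((hpt p hpL).2 h)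
        rcases InS_succ.1 hx with hxp | hxx0
        · have ihx := ih (by omega) x hxp
          have hxL : x < w1.length := InS_lt (by omega) hxp
          have hne1' : mf w1 x ≠ zigR r w1.length p := by
            intro h
            have : x = mf w1 (zigR r w1.length p) := by rw [← mf_mf h1 hxL, h]
            rw [← this] at hcc
            exact hcc hxp
          have hne2' : mf w2 x ≠ zigR r w1.length p := by
            intro h
            have : x = mf w2 (zigR r w1.length p) := by
              rw [← mf_mf h2 (by omega : x < w2.length), h]
            rw [← this] at hcc2
            exact hcc2 hxp
          constructor
          · rw [InS_succ, InS_succ]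
            constructor
            · rintro (h | h)
              · exact Or.inl (ihx.1.1 h)
              · exact absurd h hne1'
            · rintro (h | h)
              · exact Or.inl (ihx.1.2 h)
              · exact absurd h hne2'
          · intro hin
            rcases InS_succ.1 hin with h | h
            · exact ihx.2 h
            · exact absurd h hne1'
        · subst hxx0
          have hf1 : ¬ InS r w1.length (p + 1) (mf w1 (zigR r w1.length p)) := by
            intro h
            rcases InS_succ.1 h with h' | h'
            · exact hcc h'
            · exact hne1 h'
          have hf2 : ¬ InS r w1.length (p + 1) (mf w2 (zigR r w1.length p)) := by
            intro h
            rcases InS_succ.1 h with h' | h'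
            · exact hcc2 h'
            · exact hne2 h'
          exact ⟨iff_of_false hf1 hf2, fun h => absurd h hf1⟩
  have hmf : ∀ i, i < w1.length → mf w1 i = mf w2 i := by
    intro i hi
    exact (key w1.length (le_refl _) i (InS_full hi)).2 (InS_full (mf_lt_length h1 hi))
  apply List.ext_getElem hlen.symm
  intro i hi1 hi2
  have e1 := getD_eq_true_iff_lt_mf h1 hi1
  have e2 := getD_eq_true_iff_lt_mf h2 hi2
  rw [List.getD_eq_getElem _ _ hi1] at e1
  rw [List.getD_eq_getElem _ _ hi2] at e2
  rw [hmf i hi1] at e1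
  by_cases hb : w1[i] = true
  · rw [hb]; exact (e2.2 (e1.1 hb)).symm
  · have hb2 : ¬ w2[i] = true := fun hh => hb (e1.2 (e2.1 hh))
    rw [Bool.not_eq_true] at hb hb2
    rw [hb, hb2]

/-- for every `r ≥ 0`, `Ψ_r` is a bijection from `D_n` to itself,
for every `n ≥ 0`. -/
theorem psiR_bijOn (r n : ℕ) :
    Set.BijOn (psiR r) {w : List Bool | IsDyck w ∧ w.length = 2 * n}
      {w : List Bool | IsDyck w ∧ w.length = 2 * n} := by
  have hfin : {w : List Bool | IsDyck w ∧ w.length = 2 * n}.Finite :=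
    Set.Finite.subset (List.finite_length_eq Bool (2 * n)) (fun w hw => hw.2)
  have hmaps : Set.MapsTo (psiR r) {w : List Bool | IsDyck w ∧ w.length = 2 * n}
      {w : List Bool | IsDyck w ∧ w.length = 2 * n} := by
    rintro w ⟨hw, hwl⟩
    exact ⟨psiR_isDyck hw r, by rw [psiR_length]; exact hwl⟩
  have hinj : Set.InjOn (psiR r) {w : List Bool | IsDyck w ∧ w.length = 2 * n} := by
    rintro w1 ⟨hw1, hl1⟩ w2 ⟨hw2, hl2⟩ h
    exact (psiR_inj hw2 hw1 (by rw [hl1, hl2]) h.symm).symm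
  exact (Set.Finite.injOn_iff_bijOn_of_mapsTo hfin hmaps).1 hinj


end DyckBij
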